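/- (Orthogonality of Ramanujan sums) For distinct positive integers p and q, and any integer l, \sum_{n=0}^{L-1} c_p(n) c_q(n - l) = 0, where L = lcm(p, q). -/

import Mathlib

/-- The Ramanujan sum `c_p(n) = ∑_{1 ≤ k ≤ p, gcd(k,p)=1} e^{2πikn/p}`. -/
noncomputable def ramanujanSum (p : ℕ) (n : ℤ) : ℂ :=
  ∑ k ∈ (Finset.Icc 1 p).filter (fun k => Nat.gcd k p = 1),
    Complex.exp (2 * (Real.pi : ℂ) * Complex.I * (k : ℂ) * (n : ℂ) / (p : ℂ))


/-- Orthogonality of Ramanujan sums: for distinct positive integers `p ≠ q` and any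
integer `l`, `∑_{n=0}^{lcm(p,q)-1} c_p(n) c_q(n-l) = 0`. -/
theorem ramanujanSum_orthogonality (p q : ℕ) (hp : 0 < p) (hq : 0 < q) (hpq : p ≠ q)
    (l : ℤ) :
    ∑ n ∈ Finset.range (Nat.lcm p q),
      ramanujanSum p (n : ℤ) * ramanujanSum q ((n : ℤ) - l) = 0 := by
  have hp0 : (p : ℂ) ≠ 0 := Nat.cast_ne_zero.mpr hp.ne'
  have hq0 : (q : ℂ) ≠ 0 := Nat.cast_ne_zero.mpr hq.ne'
  set L := Nat.lcm p q with hLdef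
  obtain ⟨u, hu⟩ : p ∣ L := Nat.dvd_lcm_left p q
  obtain ⟨v, hv⟩ : q ∣ L := Nat.dvd_lcm_right p q
  unfold ramanujanSum
  simp_rw [Finset.sum_mul_sum]
  rw [Finset.sum_comm]
  refine Finset.sum_eq_zero fun k hk => ?_
  rw [Finset.sum_comm]
  refine Finset.sum_eq_zero fun m hm => ?_
  simp only [Finset.mem_filter, Finset.mem_Icc] at hk hm
  set a : ℂ := Complex.exp (2 * (Real.pi : ℂ) * Complex.I * k / p) with ha
  set b : ℂ := Complex.exp (2 * (Real.pi : ℂ) * Complex.I * m / q) with hb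
  set c : ℂ := Complex.exp (2 * (Real.pi : ℂ) * Complex.I * m * (-l) / q) with hc
  have hterm : ∀ n ∈ Finset.range L,
      Complex.exp (2 * (Real.pi : ℂ) * Complex.I * k * (n : ℂ) / p) *
        Complex.exp (2 * (Real.pi : ℂ) * Complex.I * m * ((n : ℂ) - (l : ℂ)) / q)
      = (a * b) ^ n * c := by
    intro n _
    rw [ha, hb, hc, mul_pow, ← Complex.exp_nat_mul, ← Complex.exp_nat_mul,
      ← Complex.exp_add, ← Complex.exp_add, ← Complex.exp_add]
    congr 1
    field_simp
    ring
  push_cast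
  rw [Finset.sum_congr rfl hterm, ← Finset.sum_mul]
  have hab : (a * b) ^ L = 1 := by
    rw [mul_pow, ha, hb, ← Complex.exp_nat_mul, ← Complex.exp_nat_mul]
    have h1 : (L : ℂ) * (2 * (Real.pi : ℂ) * Complex.I * k / p)
        = ((u * k : ℕ) : ℂ) * (2 * Real.pi * Complex.I) := by
      have : (L : ℂ) = p * u := by exact_mod_cast hu
      rw [this]; push_cast; field_simp
    have h2 : (L : ℂ) * (2 * (Real.pi : ℂ) * Complex.I * m / q)
        = ((v * m : ℕ) : ℂ) * (2 * Real.pi * Complex.I) := by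
      have : (L : ℂ) = q * v := by exact_mod_cast hv
      rw [this]; push_cast; field_simp
    rw [h1, h2, Complex.exp_nat_mul_two_pi_mul_I, Complex.exp_nat_mul_two_pi_mul_I,
      one_mul]
  have hab1 : a * b ≠ 1 := by
    intro h
    rw [ha, hb, ← Complex.exp_add, Complex.exp_eq_one_iff] at h
    obtain ⟨n, hn⟩ := h
    have hpi : (2 : ℂ) * Real.pi * Complex.I ≠ 0 := by
      simp [Real.pi_ne_zero, Complex.I_ne_zero]
    have key : ((k : ℂ) * q + m * p) = (n : ℂ) * p * q := by
      field_simp at hn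
      refine mul_left_cancel₀ hpi ?_
      linear_combination (2 * (Real.pi : ℂ) * Complex.I) * hn
    have key2 : (k * q + m * p : ℤ) = n * p * q := by exact_mod_cast key
    have hpk : (p : ℤ) ∣ (k * q : ℤ) := ⟨n * q - m, by linarith⟩
    have hqm : (q : ℤ) ∣ (m * p : ℤ) := ⟨n * p - k, by linarith⟩
    have hpk' : p ∣ k * q := by exact_mod_cast hpk
    have hqm' : q ∣ m * p := by exact_mod_cast hqm
    have h1 : p ∣ q := (Nat.Coprime.symm hk.2).dvd_of_dvd_mul_left hpk'
    have h2 : q ∣ p := (Nat.Coprime.symm hm.2).dvd_of_dvd_mul_left hqm'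
    exact hpq (Nat.dvd_antisymm h1 h2)
  rw [geom_sum_eq hab1, hab, sub_self, zero_div, zero_mul]
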